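/- Let X be a normal space and 𝒰 a σ-discrete open cover of X. Then 𝒰 admits a 𝒰-small partition of unity if and only if 𝒰 has a σ-discrete closed refinement. -/

import Mathlib

noncomputable section
open Set Topology TopologicalSpace

/-- `𝒰` is an open cover of `X`. -/
def IsOpenCover {X : Type} [TopologicalSpace X] (𝒰 : Set (Set X)) : Prop :=
  (∀ U ∈ 𝒰, IsOpen U) ∧ ⋃₀ 𝒰 = univ

/-- Star of a point with respect to a family of sets. -/
def ptStar {X : Type} (x : X) (𝒰 : Set (Set X)) : Set X := ⋃₀ {U | U ∈ 𝒰 ∧ x ∈ U}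

/-- Star of a set with respect to a family of sets. -/
def setStar {X : Type} (A : Set X) (𝒰 : Set (Set X)) : Set X :=
  ⋃₀ {U | U ∈ 𝒰 ∧ (U ∩ A).Nonempty}

/-- `𝒱` star-refines `𝒰`. -/
def StarRefines {X : Type} (𝒱 𝒰 : Set (Set X)) : Prop :=
  ∀ x : X, ∃ U ∈ 𝒰, ptStar x 𝒱 ⊆ U

/-- A continuous partition of unity viewed as a map into `l¹(S)` with image in `Δ(S)`. -/
def IsPU {X S : Type} [TopologicalSpace X] (f : X → lp (fun _ : S => ℝ) 1) : Prop :=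
  Continuous f ∧ ∀ x : X, (∀ s : S, 0 ≤ f x s) ∧ HasSum (fun s => f x s) 1

/-- The partition of unity `f` is `𝒰`-small: each carrier lies in a member of `𝒰`. -/
def IsUSmall {X S : Type} [TopologicalSpace X] (𝒰 : Set (Set X))
    (f : X → lp (fun _ : S => ℝ) 1) : Prop :=
  ∀ s : S, ∃ U ∈ 𝒰, {x : X | f x s ≠ 0} ⊆ U

/-- There exists a `𝒰`-small partition of unity on `X`. -/
def ExistsUSmallPU {X : Type} [TopologicalSpace X] (𝒰 : Set (Set X)) : Prop :=
  ∃ (S : Type) (f : X → lp (fun _ : S => ℝ) 1), IsPU f ∧ IsUSmall 𝒰 f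

/-- An indexed family of sets is discrete. -/
def DiscreteFam {X S : Type} [TopologicalSpace X] (A : S → Set X) : Prop :=
  ∀ x : X, ∃ N ∈ nhds x, {s : S | (A s ∩ N).Nonempty}.Subsingleton

/-- A family of sets (as a set of sets) is discrete. -/
def DiscreteSetFam {X : Type} [TopologicalSpace X] (𝒜 : Set (Set X)) : Prop :=
  ∀ x : X, ∃ N ∈ nhds x, {A | A ∈ 𝒜 ∧ (A ∩ N).Nonempty}.Subsingleton

/-- `𝒰` has a σ-discrete closed refinement. -/
def HasSigmaDiscreteClosedRefinement {X : Type} [TopologicalSpace X]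
    (𝒰 : Set (Set X)) : Prop :=
  ∃ D : ℕ → Set (Set X), (∀ n, DiscreteSetFam (D n)) ∧
    (∀ n, ∀ F ∈ D n, IsClosed F) ∧
    (∀ n, ∀ F ∈ D n, ∃ U ∈ 𝒰, F ⊆ U) ∧
    ⋃₀ (⋃ n, D n) = univ

/-- `X` is collectionwise normal. -/
def CwNormal (X : Type) [TopologicalSpace X] : Prop :=
  ∀ (S : Type) (A : S → Set X), (∀ s, IsClosed (A s)) → DiscreteFam A →
    ∃ V : S → Set X, (∀ s, IsOpen (V s)) ∧ (∀ s, A s ⊆ V s) ∧ DiscreteFam V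

/-- A σ-discrete open cover of a normal space admits a small partition of unity iff it has
a σ-discrete closed refinement. -/


lemma sub_discrete {X : Type} [TopologicalSpace X] {𝒜 ℬ : Set (Set X)}
    (h : DiscreteSetFam ℬ) (hs : 𝒜 ⊆ ℬ) : DiscreteSetFam 𝒜 := by
  intro x
  obtain ⟨N, hN, hsub⟩ := h x
  exact ⟨N, hN, fun A hA B hB => hsub ⟨hs hA.1, hA.2⟩ ⟨hs hB.1, hB.2⟩⟩

lemma isClosed_sUnion_of_discrete {X : Type} [TopologicalSpace X] {𝒜 : Set (Set X)}
    (h : DiscreteSetFam 𝒜) (hc : ∀ A ∈ 𝒜, IsClosed A) : IsClosed (⋃₀ 𝒜) := by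
  rw [← isOpen_compl_iff, isOpen_iff_mem_nhds]
  intro x hx
  obtain ⟨N, hN, hsub⟩ := h x
  by_cases hex : ∃ A, A ∈ 𝒜 ∧ (A ∩ N).Nonempty
  · obtain ⟨A₀, hA₀, hA₀N⟩ := hex
    have hxA₀ : x ∈ A₀ᶜ := fun hxa => hx ⟨A₀, hA₀, hxa⟩
    have : N ∩ A₀ᶜ ∈ nhds x :=
      Filter.inter_mem hN (((hc A₀ hA₀).isOpen_compl).mem_nhds hxA₀)
    refine Filter.mem_of_superset this ?_
    rintro y ⟨hyN, hyA⟩ ⟨B, hB, hyB⟩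
    exact hyA (hsub ⟨hB, y, hyB, hyN⟩ ⟨hA₀, hA₀N⟩ ▸ hyB)
  · refine Filter.mem_of_superset hN ?_
    rintro y hyN ⟨B, hB, hyB⟩
    exact hex ⟨B, hB, y, hyB, hyN⟩

lemma summable_of_subsingleton_support {ι : Type*} {f : ι → ℝ}
    (h : (Function.support f).Subsingleton) : Summable f := by
  rcases h.eq_empty_or_singleton with he | ⟨a, ha⟩
  · rw [Function.support_eq_empty_iff] at he
    rw [he]; exact summable_zero
  · refine summable_of_ne_finset_zero (s := {a}) fun b hb => ?_
    by_contra hfb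
    exact hb (by simpa [ha] using Function.mem_support.2 hfb)

lemma tsum_le_of_subsingleton_support {ι : Type*} {f : ι → ℝ} {c : ℝ}
    (h : (Function.support f).Subsingleton) (hle : ∀ i, f i ≤ c) (hc : 0 ≤ c) :
    ∑' i, f i ≤ c := by
  rcases h.eq_empty_or_singleton with he | ⟨a, ha⟩
  · rw [Function.support_eq_empty_iff] at he
    simpa [he]
  · rw [tsum_eq_single a (fun b hb => by
      by_contra hfb
      exact hb (by simpa [ha] using Function.mem_support.2 hfb))]
    exact hle a

def eval1 {S : Type} (s : S) : lp (fun _ : S => ℝ) 1 →L[ℝ] ℝ :=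
  LinearMap.mkContinuous
    { toFun := fun v => v s
      map_add' := fun v w => by simp only [lp.coeFn_add, Pi.add_apply]
      map_smul' := fun c v => by simp only [lp.coeFn_smul, Pi.smul_apply, RingHom.id_apply, smul_eq_mul] } 1
    fun v => by show |(v : S → ℝ) s| ≤ 1 * ‖v‖; simpa using lp.norm_apply_le_norm one_ne_zero v s

lemma eval1_apply {S : Type} (s : S) (v : lp (fun _ : S => ℝ) 1) : eval1 s v = v s := rfl

lemma abs_apply_le_norm {S : Type} (v : lp (fun _ : S => ℝ) 1) (s : S) : |v s| ≤ ‖v‖ := by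
  simpa using lp.norm_apply_le_norm one_ne_zero v s

lemma norm_eq_tsum_abs {S : Type} (v : lp (fun _ : S => ℝ) 1) : ‖v‖ = ∑' s, |v s| := by
  have := lp.norm_eq_tsum_rpow (p := 1) (by norm_num) v
  simpa using this

lemma reverse {X : Type} [TopologicalSpace X] [NormalSpace X] (u : ℕ → Set (Set X))
    (hd : ∀ n, DiscreteSetFam (u n)) (𝒰 : Set (Set X)) (h𝒰 : 𝒰 = ⋃ n, u n)
    (hcov : IsOpenCover 𝒰) (h : HasSigmaDiscreteClosedRefinement 𝒰) : ExistsUSmallPU 𝒰 := by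
  classical
  haveI : Fact ((1:ENNReal) ≤ 1) := ⟨le_rfl⟩
  obtain ⟨D, hDd, hDc, hDr, hDcov⟩ := h
  -- choose for each F ∈ D n an index m and a member V of u m containing F
  have hch : ∀ n F, F ∈ D n → ∃ (m : ℕ) (V : Set X), V ∈ u m ∧ F ⊆ V := by
    intro n F hF
    obtain ⟨U, hU, hFU⟩ := hDr n F hF
    rw [h𝒰, mem_iUnion] at hU
    obtain ⟨m, hm⟩ := hU
    exact ⟨m, U, hm, hFU⟩
  choose! mm VV hVu hFV using hch
  -- index type
  set S : Type := (nm : ℕ × ℕ) × {V : Set X // V ∈ u nm.2} with hS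
  set G : S → Set X :=
    fun s => ⋃₀ {F | F ∈ D s.1.1 ∧ mm s.1.1 F = s.1.2 ∧ VV s.1.1 F = s.2.1} with hG
  have hGclosed : ∀ s, IsClosed (G s) := by
    intro s
    refine isClosed_sUnion_of_discrete (sub_discrete (hDd s.1.1) fun F hF => hF.1)
      fun F hF => hDc _ F hF.1
  have hGsub : ∀ s, G s ⊆ s.2.1 := by
    rintro s x ⟨F, ⟨hF, hmm, hVV⟩, hxF⟩
    exact hVV ▸ hFV s.1.1 F hF hxF
  have hVopen : ∀ s : S, IsOpen (s.2.1 : Set X) := by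
    intro s
    exact hcov.1 _ (h𝒰 ▸ mem_iUnion.2 ⟨s.1.2, s.2.2⟩)
  -- Urysohn functions
  have hury : ∀ s : S, ∃ g : C(X, ℝ),
      EqOn g 0 (s.2.1 : Set X)ᶜ ∧ EqOn g 1 (G s) ∧ ∀ x, g x ∈ Icc (0:ℝ) 1 := by
    intro s
    exact exists_continuous_zero_one_of_isClosed (hVopen s).isClosed_compl (hGclosed s)
      ((disjoint_compl_left : Disjoint (s.2.1 : Set X)ᶜ s.2.1).mono_right (hGsub s))
  choose g hg0 hg1 hg01 using hury
  have hgmem : ∀ (s : S) (x : X), g s x ≠ 0 → x ∈ (s.2.1 : Set X) := by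
    intro s x hx
    by_contra hmem
    exact hx (hg0 s hmem)
  -- weights
  set w : S → ℝ := fun s => (2:ℝ)⁻¹ ^ s.1.1 * (2:ℝ)⁻¹ ^ s.1.2 with hw
  set c : ℕ × ℕ → ℝ := fun nm => (2:ℝ)⁻¹ ^ nm.1 * (2:ℝ)⁻¹ ^ nm.2 with hc
  have hcpos : ∀ nm, 0 < c nm := by intro nm; positivity
  have hcsum : Summable c := by
    have hgeo : Summable fun n : ℕ => (2:ℝ)⁻¹ ^ n :=
      summable_geometric_of_lt_one (by norm_num) (by norm_num)
    exact hgeo.mul_of_nonneg hgeo (fun n => by positivity) (fun n => by positivity)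
  set φ : X → S → ℝ := fun x s => w s * g s x with hφ
  have hφnonneg : ∀ x s, 0 ≤ φ x s := by
    intro x s
    have := (hg01 s x).1
    have hwpos : 0 < w s := by positivity
    positivity
  have hφle : ∀ x s, φ x s ≤ c s.1 := by
    intro x s
    have h1 := (hg01 s x).2
    have hwpos : (0:ℝ) < w s := by positivity
    calc φ x s ≤ w s * 1 := by
          exact mul_le_mul_of_nonneg_left h1 (le_of_lt hwpos)
      _ = c s.1 := by rw [mul_one]
  -- the blocks
  set ψ : ℕ × ℕ → X → S → ℝ := fun nm x s => if s.1 = nm then φ x s else 0 with hψ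
  have hψsupp : ∀ nm x, (Function.support (ψ nm x)).Subsingleton := by
    intro nm x
    obtain ⟨N, hN, hsub⟩ := hd nm.2 x
    have hxN : x ∈ N := mem_of_mem_nhds hN
    have haux : ∀ s : S, ψ nm x s ≠ 0 → s.1 = nm ∧ s.2.1 ∈ u nm.2 ∧ x ∈ s.2.1 := by
      intro s hs
      have h1 : s.1 = nm := by
        by_contra hne
        exact hs (if_neg hne)
      have hs' : φ x s ≠ 0 := by simpa [hψ, h1] using hs
      refine ⟨h1, h1 ▸ s.2.2, hgmem s x ?_⟩
      intro hz
      exact hs' (by simp [hφ, hz])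
    intro s1 hs1 s2 hs2
    obtain ⟨e1, m1, x1⟩ := haux s1 (Function.mem_support.1 hs1)
    obtain ⟨e2, m2, x2⟩ := haux s2 (Function.mem_support.1 hs2)
    have hV : s1.2.1 = s2.2.1 := hsub ⟨m1, x, x1, hxN⟩ ⟨m2, x, x2, hxN⟩
    obtain ⟨nm1, V1, hV1⟩ := s1
    obtain ⟨nm2, V2, hV2⟩ := s2
    dsimp only at e1 e2 hV
    subst e1
    subst e2
    subst hV
    rfl
  have hψnorm_supp : ∀ nm x, (Function.support fun s => ‖ψ nm x s‖).Subsingleton := by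
    intro nm x
    have : (Function.support fun s => ‖ψ nm x s‖) = Function.support (ψ nm x) := by
      ext s; simp [Function.mem_support]
    rw [this]; exact hψsupp nm x
  have hψmem : ∀ nm x, Memℓp (ψ nm x) 1 := by
    intro nm x
    apply memℓp_gen
    simpa [Real.rpow_one] using summable_of_subsingleton_support (hψnorm_supp nm x)
  set Fblk : ℕ × ℕ → X → lp (fun _ : S => ℝ) 1 := fun nm x => ⟨ψ nm x, hψmem nm x⟩ with hFblk
  have hFblk_apply : ∀ nm x s, (Fblk nm x : ∀ _ : S, ℝ) s = ψ nm x s := fun _ _ _ => rfl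
  have hψle : ∀ nm x s, ψ nm x s ≤ c nm := by
    intro nm x s
    simp only [hψ]
    split_ifs with h1
    · exact h1 ▸ hφle x s
    · exact le_of_lt (hcpos nm)
  have hψnonneg : ∀ nm x s, 0 ≤ ψ nm x s := by
    intro nm x s
    simp only [hψ]
    split_ifs with h1
    · exact hφnonneg x s
    · exact le_rfl
  have hFblknorm : ∀ nm x, ‖Fblk nm x‖ ≤ c nm := by
    intro nm x
    rw [norm_eq_tsum_abs]
    refine tsum_le_of_subsingleton_support ?_ ?_ (le_of_lt (hcpos nm))
    · have : (Function.support fun s => |(Fblk nm x : ∀ _ : S, ℝ) s|) =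
          Function.support (ψ nm x) := by
        ext s; simp [Function.mem_support, hFblk_apply]
      rw [this]; exact hψsupp nm x
    · intro s
      rw [hFblk_apply, abs_of_nonneg (hψnonneg nm x s)]
      exact hψle nm x s
  -- continuity of blocks
  have hFblkcont : ∀ nm, Continuous (Fblk nm) := by
    intro nm
    rw [continuous_iff_continuousAt]
    intro x₀
    obtain ⟨N, hN, hsub⟩ := hd nm.2 x₀
    by_cases hex : ∃ V, V ∈ u nm.2 ∧ (V ∩ N).Nonempty
    · obtain ⟨V₀, hV₀u, hV₀N⟩ := hex
      set s₀ : S := ⟨nm, V₀, hV₀u⟩ with hs₀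
      set e₀ : lp (fun _ : S => ℝ) 1 := lp.single 1 s₀ (1:ℝ) with he₀
      have key : ∀ y ∈ N, Fblk nm y = (w s₀ * g s₀ y) • e₀ := by
        intro y hy
        apply lp.ext
        funext s
        rw [he₀, lp.coeFn_smul, Pi.smul_apply, smul_eq_mul]
        by_cases hss : s = s₀
        · subst hss
          rw [lp.single_apply_self, mul_one]
          show ψ nm y s₀ = φ y s₀
          simp [hψ, hs₀]
        · rw [lp.single_apply_ne 1 s₀ _ hss, mul_zero]
          show ψ nm y s = 0
          by_cases h1 : s.1 = nm
          · suffices hz : g s y = 0 by simp [hψ, h1, hφ, hz]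
            by_contra hgz
            have hyV : y ∈ s.2.1 := hgmem s y hgz
            have hVe : s.2.1 = V₀ := hsub ⟨h1 ▸ s.2.2, y, hyV, hy⟩ ⟨hV₀u, hV₀N⟩
            apply hss
            obtain ⟨nm1, V1, hV1⟩ := s
            dsimp only at h1 hVe
            subst h1
            subst hVe
            rfl
          · simp [hψ, h1]
      have hcont : Continuous fun y => (w s₀ * g s₀ y) • e₀ :=
        (continuous_const.mul (g s₀).continuous).smul continuous_const
      exact hcont.continuousAt.congr
        (Filter.eventuallyEq_of_mem hN fun y hy => (key y hy).symm)
    · have key : ∀ y ∈ N, Fblk nm y = 0 := by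
        intro y hy
        apply lp.ext
        funext s
        show ψ nm y s = (0 : ∀ _ : S, ℝ) s
        by_cases h1 : s.1 = nm
        · suffices hz : g s y = 0 by simp [hψ, h1, hφ, hz]
          by_contra hgz
          exact hex ⟨s.2.1, h1 ▸ s.2.2, ⟨y, hgmem s y hgz, hy⟩⟩
        · simp [hψ, h1]
      exact continuousAt_const.congr
        (Filter.eventuallyEq_of_mem hN fun y hy => (key y hy).symm)
  -- the total map
  set F : X → lp (fun _ : S => ℝ) 1 := fun x => ∑' nm, Fblk nm x with hF
  have hFcont : Continuous F := continuous_tsum hFblkcont hcsum fun nm x => hFblknorm nm x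
  have hFblksum : ∀ x, Summable fun nm => Fblk nm x := fun x =>
    Summable.of_norm_bounded hcsum fun nm => hFblknorm nm x
  have hFapp : ∀ x s, (F x : ∀ _ : S, ℝ) s = φ x s := by
    intro x s
    have h1 : eval1 s (F x) = ∑' nm, eval1 s (Fblk nm x) :=
      ContinuousLinearMap.map_tsum _ (hFblksum x)
    have h2 : ∀ nm, eval1 s (Fblk nm x) = ψ nm x s := fun nm => rfl
    have h3 : (∑' nm, ψ nm x s) = φ x s := by
      rw [tsum_eq_single s.1 (fun nm hnm => if_neg (Ne.symm hnm))]
      simp [hψ]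
    calc (F x : ∀ _ : S, ℝ) s = eval1 s (F x) := rfl
      _ = ∑' nm, eval1 s (Fblk nm x) := h1
      _ = ∑' nm, ψ nm x s := by simp only [h2]
      _ = φ x s := h3
  -- summability of φ x
  have hfib : ∀ x (nm : ℕ × ℕ),
      (Function.support fun V : {V : Set X // V ∈ u nm.2} => φ x ⟨nm, V⟩).Subsingleton := by
    intro x nm
    intro V1 h1 V2 h2
    have e1 : ψ nm x ⟨nm, V1⟩ ≠ 0 := by
      have heq : ψ nm x ⟨nm, V1⟩ = φ x ⟨nm, V1⟩ := if_pos rfl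
      rw [heq]
      exact Function.mem_support.1 h1
    have e2 : ψ nm x ⟨nm, V2⟩ ≠ 0 := by
      have heq : ψ nm x ⟨nm, V2⟩ = φ x ⟨nm, V2⟩ := if_pos rfl
      rw [heq]
      exact Function.mem_support.1 h2
    have := hψsupp nm x e1 e2
    exact (Sigma.mk.inj_iff.1 this).2.eq
  have hφsum : ∀ x, Summable (φ x) := by
    intro x
    refine (summable_sigma_of_nonneg (β := fun nm : ℕ × ℕ => {V : Set X // V ∈ u nm.2})
      fun s => hφnonneg x s).2 ⟨?_, ?_⟩
    · intro nm
      exact summable_of_subsingleton_support (hfib x nm)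
    · refine Summable.of_nonneg_of_le
        (fun nm => tsum_nonneg fun V => hφnonneg x _) (fun nm => ?_) hcsum
      exact tsum_le_of_subsingleton_support (hfib x nm)
        (fun V => hφle x _) (le_of_lt (hcpos nm))
  -- the normalizer
  set gg : X → ℝ := fun x => ∑' s, φ x s with hgg
  have hggF : ∀ x, gg x = ‖F x‖ := by
    intro x
    rw [norm_eq_tsum_abs]
    refine tsum_congr fun s => ?_
    rw [hFapp, abs_of_nonneg (hφnonneg x s)]
  have hggcont : Continuous gg := by
    have : Continuous fun x => ‖F x‖ := hFcont.norm
    exact (funext hggF : gg = fun x => ‖F x‖) ▸ this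
  have hggpos : ∀ x, 0 < gg x := by
    intro x
    have hx : x ∈ ⋃₀ ⋃ n, D n := hDcov ▸ mem_univ x
    obtain ⟨F₀, hF₀mem, hxF₀⟩ := hx
    rw [mem_iUnion] at hF₀mem
    obtain ⟨n, hF₀⟩ := hF₀mem.imp fun n h => h
    set s₀ : S := ⟨(n, mm n F₀), VV n F₀, hVu n F₀ hF₀⟩ with hs₀
    have hxG : x ∈ G s₀ := ⟨F₀, ⟨hF₀, rfl, rfl⟩, hxF₀⟩
    have hg1x : g s₀ x = 1 := hg1 s₀ hxG
    have hwpos : 0 < φ x s₀ := by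
      rw [hφ]; dsimp only; rw [hg1x, mul_one]; positivity
    calc (0:ℝ) < φ x s₀ := hwpos
      _ ≤ gg x := Summable.le_tsum (hφsum x) s₀ fun s _ => hφnonneg x s
  -- the partition of unity
  refine ⟨S, fun x => (gg x)⁻¹ • F x, ⟨?_, ?_⟩, ?_⟩
  · exact (hggcont.inv₀ fun x => ne_of_gt (hggpos x)).smul hFcont
  · intro x
    have happ : ∀ s, ((((gg x)⁻¹ • F x : lp (fun _ : S => ℝ) 1)) : ∀ _ : S, ℝ) s
        = (gg x)⁻¹ * φ x s := by
      intro s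
      rw [lp.coeFn_smul, Pi.smul_apply, smul_eq_mul, hFapp]
    constructor
    · intro s
      rw [happ s]
      have := hφnonneg x s
      have := le_of_lt (hggpos x)
      positivity
    · have h1 : HasSum (φ x) (gg x) := (hφsum x).hasSum
      have h2 := h1.mul_left (gg x)⁻¹
      rw [inv_mul_cancel₀ (ne_of_gt (hggpos x))] at h2
      exact h2.congr_fun fun s => happ s
  · rintro ⟨nm, V, hV⟩
    refine ⟨V, h𝒰 ▸ mem_iUnion.2 ⟨nm.2, hV⟩, ?_⟩
    intro x hx
    simp only [mem_setOf_eq] at hx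
    have : φ x ⟨nm, V, hV⟩ ≠ 0 := by
      intro hz
      apply hx
      rw [lp.coeFn_smul, Pi.smul_apply, smul_eq_mul, hFapp, hz, mul_zero]
    have hgz : g ⟨nm, V, hV⟩ x ≠ 0 := by
      intro hz
      exact this (by simp [hφ, hz])
    exact hgmem _ x hgz

lemma forward {X : Type} [TopologicalSpace X] (u : ℕ → Set (Set X))
    (hd : ∀ n, DiscreteSetFam (u n)) (𝒰 : Set (Set X)) (h𝒰 : 𝒰 = ⋃ n, u n)
    (h : ExistsUSmallPU 𝒰) : HasSigmaDiscreteClosedRefinement 𝒰 := by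
  obtain ⟨S, f, ⟨hfc, hfx⟩, hsmall⟩ := h
  choose Uc hUc hUcs using hsmall
  set Q : Set X → lp (fun _ : S => ℝ) 1 → ℝ :=
    fun U v => sSup (insert 0 ((fun s => v s) '' {s | Uc s = U})) with hQ
  have hbdd : ∀ U (v : lp (fun _ : S => ℝ) 1),
      BddAbove (insert 0 ((fun s => v s) '' {s | Uc s = U})) := by
    intro U v
    refine ⟨‖v‖, ?_⟩
    rintro a (rfl | ⟨s, -, rfl⟩)
    · exact norm_nonneg v
    · exact (le_abs_self _).trans (abs_apply_le_norm v s)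
  have hQle : ∀ U v w, Q U v ≤ Q U w + ‖v - w‖ := by
    intro U v w
    refine csSup_le (insert_nonempty _ _) ?_
    rintro a (rfl | ⟨s, hs, rfl⟩)
    · have h0 : (0:ℝ) ≤ Q U w := le_csSup (hbdd U w) (mem_insert _ _)
      linarith [norm_nonneg (v - w)]
    · have h1 : w s ≤ Q U w := le_csSup (hbdd U w) (mem_insert_of_mem _ ⟨s, hs, rfl⟩)
      have h2 : v s - w s ≤ ‖v - w‖ := by
        have := abs_apply_le_norm (v - w) s
        rw [lp.coeFn_sub, Pi.sub_apply] at this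
        exact (le_abs_self _).trans this
      linarith
  have hQlip : ∀ U, LipschitzWith 1 (Q U) := by
    intro U
    refine LipschitzWith.of_dist_le_mul fun v w => ?_
    rw [NNReal.coe_one, Real.dist_eq, one_mul, dist_eq_norm, abs_sub_le_iff]
    constructor
    · linarith [hQle U v w]
    · have := hQle U w v
      rw [norm_sub_rev] at this
      linarith
  have hQcont : ∀ U, Continuous fun x => Q U (f x) := fun U => ((hQlip U).continuous).comp hfc
  set FF : Set X → ℕ → Set X := fun U m => {x | ((m:ℝ) + 1)⁻¹ ≤ Q U (f x)} with hFF
  have hFFclosed : ∀ U m, IsClosed (FF U m) :=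
    fun U m => isClosed_le continuous_const (hQcont U)
  have hFFsub : ∀ U m, FF U m ⊆ U := by
    intro U m x hx
    have hpos : (0:ℝ) < Q U (f x) := lt_of_lt_of_le (by positivity) hx
    obtain ⟨a, ha, hapos⟩ := exists_lt_of_lt_csSup (insert_nonempty _ _) hpos
    rcases ha with rfl | ⟨s, hs, rfl⟩
    · exact absurd hapos (lt_irrefl 0)
    · exact hs ▸ hUcs s (ne_of_gt hapos)
  refine ⟨fun k => (fun U => FF U k.unpair.2) '' (u k.unpair.1), ?_, ?_, ?_, ?_⟩
  · intro k x
    obtain ⟨N, hN, hsub⟩ := hd k.unpair.1 x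
    refine ⟨N, hN, ?_⟩
    rintro A ⟨⟨U1, hU1, rfl⟩, hA1⟩ B ⟨⟨U2, hU2, rfl⟩, hB1⟩
    have hU12 : U1 = U2 := hsub
      ⟨hU1, hA1.mono (inter_subset_inter_left N (hFFsub U1 _))⟩
      ⟨hU2, hB1.mono (inter_subset_inter_left N (hFFsub U2 _))⟩
    rw [hU12]
  · rintro k A ⟨U, -, rfl⟩
    exact hFFclosed U _
  · rintro k A ⟨U, hU, rfl⟩
    exact ⟨U, h𝒰 ▸ mem_iUnion.2 ⟨k.unpair.1, hU⟩, hFFsub U _⟩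
  · rw [eq_univ_iff_forall]
    intro x
    obtain ⟨hnn, hsum⟩ := hfx x
    have hex : ∃ s, 0 < f x s := by
      by_contra hns
      push_neg at hns
      have hz : ∀ s, f x s = 0 := fun s => le_antisymm (hns s) (hnn s)
      have := hsum.unique (show HasSum (fun s => f x s) 0 by simp only [hz]; exact hasSum_zero)
      norm_num at this
    obtain ⟨s, hs⟩ := hex
    obtain ⟨m, hm⟩ := exists_nat_one_div_lt hs
    obtain ⟨n, hn⟩ : ∃ n, Uc s ∈ u n := by
      have := hUc s
      rw [h𝒰, mem_iUnion] at this
      exact this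
    have hxF : x ∈ FF (Uc s) m := by
      have h1 : f x s ≤ Q (Uc s) (f x) :=
        le_csSup (hbdd _ _) (mem_insert_of_mem _ ⟨s, rfl, rfl⟩)
      have h2 : ((m:ℝ) + 1)⁻¹ ≤ f x s := by
        rw [one_div] at hm
        exact le_of_lt hm
      exact le_trans h2 h1
    refine ⟨FF (Uc s) m, ?_, hxF⟩
    refine mem_iUnion.2 ⟨Nat.pair n m, ⟨Uc s, ?_, ?_⟩⟩
    · simpa [Nat.unpair_pair] using hn
    · simp [Nat.unpair_pair]

/-- A σ-discrete open cover of a normal space admits a small partition of unity iff it has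
a σ-discrete closed refinement. -/
theorem stmt9 (X : Type) [TopologicalSpace X] [NormalSpace X]
    (u : ℕ → Set (Set X)) (hd : ∀ n, DiscreteSetFam (u n))
    (𝒰 : Set (Set X)) (h𝒰 : 𝒰 = ⋃ n, u n) (hcov : IsOpenCover 𝒰) :
    ExistsUSmallPU 𝒰 ↔ HasSigmaDiscreteClosedRefinement 𝒰 := by
  exact ⟨forward u hd 𝒰 h𝒰, reverse u hd 𝒰 h𝒰 hcov⟩
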